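/- For every real β > −1, the following integral identity holds: ∫_0^{π/2} sin²(u)·cos²(u) / (1 + β·sin²(u))² du = (π/4) · 1 / ( √(1+β) · (1 + √(1+β))² ). Equivalently, (8/π)·∫_0^{π/2} sin²u·cos²u/(1+β sin²u)² du = 2/( √(1+β)·(1+√(1+β))² ). -/

import Mathlib

private lemma aux_pos (t : ℝ) (ht : 0 < t) (u : ℝ) :
    0 < 1 + (t ^ 2 - 1) * Real.sin u ^ 2 := by
  rcases le_or_gt (t ^ 2) 1 with h | h
  · nlinarith [sq_nonneg (Real.sin u), Real.sin_sq_add_cos_sq u, sq_nonneg (Real.cos u), sq_nonneg t]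
  · nlinarith [sq_nonneg (Real.sin u)]

set_option maxHeartbeats 1000000 in
open Real intervalIntegral in
private lemma aux_hasDeriv (t : ℝ) (ht : 0 < t) (ht1 : t ≠ 1) (u : ℝ) :
    HasDerivAt (fun v : ℝ =>
      (-v + ((t ^ 2 + 1) / (2 * t)) *
          (v + Real.arctan ((t - 1) * (Real.sin v * Real.cos v) /
            (Real.cos v ^ 2 + t * Real.sin v ^ 2))) -
        ((t ^ 2 - 1) / 2) *
          (Real.sin v * Real.cos v / (1 + (t ^ 2 - 1) * Real.sin v ^ 2))) / (t ^ 2 - 1) ^ 2)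
      (Real.sin u ^ 2 * Real.cos u ^ 2 / (1 + (t ^ 2 - 1) * Real.sin u ^ 2) ^ 2) u := by
  have pyth := Real.sin_sq_add_cos_sq u
  have htt : t ^ 2 - 1 ≠ 0 := by
    intro h
    have : (t - 1) * (t + 1) = 0 := by linarith [sq_nonneg t]; 
    rcases mul_eq_zero.1 (by nlinarith : (t - 1) * (t + 1) = 0) with h' | h'
    · exact ht1 (by linarith)
    · nlinarith
  have hQ : 0 < Real.cos u ^ 2 + t * Real.sin u ^ 2 := by
    rcases le_or_gt t 1 with h | h
    · nlinarith [sq_nonneg (Real.sin u), sq_nonneg (Real.cos u)]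
    · nlinarith [sq_nonneg (Real.sin u), sq_nonneg (Real.cos u)]
  have hD : 0 < 1 + (t ^ 2 - 1) * Real.sin u ^ 2 := aux_pos t ht u
  have hsin2 : HasDerivAt (fun v => Real.sin v ^ 2) (2 * Real.sin u * Real.cos u) u := by
    exact ((Real.hasDerivAt_sin u).pow 2).congr_deriv (by simp)
  have hcos2 : HasDerivAt (fun v => Real.cos v ^ 2) (-(2 * Real.cos u * Real.sin u)) u := by
    exact ((Real.hasDerivAt_cos u).pow 2).congr_deriv (by simp)
  have dsc : HasDerivAt (fun v => Real.sin v * Real.cos v)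
      (Real.cos u ^ 2 - Real.sin u ^ 2) u := by
    have := (Real.hasDerivAt_sin u).mul (Real.hasDerivAt_cos u)
    exact this.congr_deriv (by ring)
  have dN : HasDerivAt (fun v => (t - 1) * (Real.sin v * Real.cos v))
      ((t - 1) * (Real.cos u ^ 2 - Real.sin u ^ 2)) u := dsc.const_mul _
  have dQ : HasDerivAt (fun v => Real.cos v ^ 2 + t * Real.sin v ^ 2)
      (2 * (t - 1) * (Real.sin u * Real.cos u)) u := by
    refine (hcos2.add (hsin2.const_mul t)).congr_deriv ?_
    ring
  have dR : HasDerivAt (fun v => (t - 1) * (Real.sin v * Real.cos v) /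
      (Real.cos v ^ 2 + t * Real.sin v ^ 2))
      (((t - 1) * (Real.cos u ^ 2 - Real.sin u ^ 2) *
          (Real.cos u ^ 2 + t * Real.sin u ^ 2) -
        (t - 1) * (Real.sin u * Real.cos u) * (2 * (t - 1) * (Real.sin u * Real.cos u))) /
        (Real.cos u ^ 2 + t * Real.sin u ^ 2) ^ 2) u := dN.div dQ hQ.ne'
  have dA : HasDerivAt (fun v => Real.arctan ((t - 1) * (Real.sin v * Real.cos v) /
      (Real.cos v ^ 2 + t * Real.sin v ^ 2)))
      ((1 / (1 + ((t - 1) * (Real.sin u * Real.cos u) /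
          (Real.cos u ^ 2 + t * Real.sin u ^ 2)) ^ 2)) *
        (((t - 1) * (Real.cos u ^ 2 - Real.sin u ^ 2) *
            (Real.cos u ^ 2 + t * Real.sin u ^ 2) -
          (t - 1) * (Real.sin u * Real.cos u) * (2 * (t - 1) * (Real.sin u * Real.cos u))) /
          (Real.cos u ^ 2 + t * Real.sin u ^ 2) ^ 2)) u := by
    exact (Real.hasDerivAt_arctan _).comp u dR
  have dDen : HasDerivAt (fun v => 1 + (t ^ 2 - 1) * Real.sin v ^ 2)
      ((t ^ 2 - 1) * (2 * (Real.sin u * Real.cos u))) u := by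
    refine ((hsin2.const_mul (t ^ 2 - 1)).const_add 1).congr_deriv ?_
    ring
  have dT : HasDerivAt (fun v => Real.sin v * Real.cos v /
      (1 + (t ^ 2 - 1) * Real.sin v ^ 2))
      (((Real.cos u ^ 2 - Real.sin u ^ 2) * (1 + (t ^ 2 - 1) * Real.sin u ^ 2) -
        Real.sin u * Real.cos u * ((t ^ 2 - 1) * (2 * (Real.sin u * Real.cos u)))) /
        (1 + (t ^ 2 - 1) * Real.sin u ^ 2) ^ 2) u := dsc.div dDen hD.ne'
  have dF := ((((hasDerivAt_id u).neg.add
      (((hasDerivAt_id u).add dA).const_mul ((t ^ 2 + 1) / (2 * t)))).sub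
      (dT.const_mul ((t ^ 2 - 1) / 2))).div_const ((t ^ 2 - 1) ^ 2))
  refine dF.congr_deriv (Eq.symm ?_)
  have hQN : (Real.cos u ^ 2 + t * Real.sin u ^ 2) ^ 2 +
      ((t - 1) * (Real.sin u * Real.cos u)) ^ 2 =
      1 + (t ^ 2 - 1) * Real.sin u ^ 2 := by
    linear_combination (Real.cos u ^ 2 + t ^ 2 * Real.sin u ^ 2 + 1) * pyth
  have h1 : 1 + ((t - 1) * (Real.sin u * Real.cos u) /
      (Real.cos u ^ 2 + t * Real.sin u ^ 2)) ^ 2 =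
      (1 + (t ^ 2 - 1) * Real.sin u ^ 2) / (Real.cos u ^ 2 + t * Real.sin u ^ 2) ^ 2 := by
    rw [div_pow, ← hQN]
    field_simp
  have hNum : (t - 1) * (Real.cos u ^ 2 - Real.sin u ^ 2) *
        (Real.cos u ^ 2 + t * Real.sin u ^ 2) -
      (t - 1) * (Real.sin u * Real.cos u) * (2 * (t - 1) * (Real.sin u * Real.cos u)) =
      t - (1 + (t ^ 2 - 1) * Real.sin u ^ 2) := by
    linear_combination ((t - 1) * (Real.cos u ^ 2 - t * Real.sin u ^ 2 + 1)) * pyth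
  rw [h1, hNum]
  have h2 : 1 / ((1 + (t ^ 2 - 1) * Real.sin u ^ 2) / (Real.cos u ^ 2 + t * Real.sin u ^ 2) ^ 2) *
      ((t - (1 + (t ^ 2 - 1) * Real.sin u ^ 2)) / (Real.cos u ^ 2 + t * Real.sin u ^ 2) ^ 2) =
      (t - (1 + (t ^ 2 - 1) * Real.sin u ^ 2)) / (1 + (t ^ 2 - 1) * Real.sin u ^ 2) := by
    rw [one_div_div, div_mul_div_comm]
    rw [mul_comm (1 + (t ^ 2 - 1) * Real.sin u ^ 2) ((Real.cos u ^ 2 + t * Real.sin u ^ 2) ^ 2)]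
    exact mul_div_mul_left _ _ (pow_ne_zero 2 hQ.ne')
  rw [h2]
  field_simp
  have hD' : 1 + Real.sin u ^ 2 * (t ^ 2 - 1) ≠ 0 := by nlinarith
  simp only [Real.cos_sq']
  field_simp
  ring

/-- **Tilted gradient-variance integral identity.** For every real `β > −1`,
`∫_0^{π/2} sin²u·cos²u / (1 + β·sin²u)² du = (π/4)·1/(√(1+β)·(1+√(1+β))²)`. -/
theorem tilted_variance_integral (β : ℝ) (hβ : -1 < β) :
    ∫ u in (0 : ℝ)..(Real.pi / 2),
        Real.sin u ^ 2 * Real.cos u ^ 2 / (1 + β * Real.sin u ^ 2) ^ 2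
      = (Real.pi / 4) *
          (1 / (Real.sqrt (1 + β) * (1 + Real.sqrt (1 + β)) ^ 2)) := by
  rcases eq_or_ne β 0 with h0 | h0
  · subst h0
    have h4 : (4 : ℝ) * (Real.pi / 2) = 2 * Real.pi := by ring
    simp only [zero_mul, add_zero, one_pow, div_one, add_zero]
    rw [integral_sin_sq_mul_cos_sq, Real.sqrt_one, h4, Real.sin_two_pi]
    simp
    ring
  · set t := Real.sqrt (1 + β) with ht_def
    have h1β : (0 : ℝ) < 1 + β := by linarith
    have htpos : 0 < t := Real.sqrt_pos.mpr h1β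
    have ht2 : t ^ 2 = 1 + β := Real.sq_sqrt h1β.le
    have hβt : β = t ^ 2 - 1 := by linarith
    have ht1 : t ≠ 1 := by
      intro h
      apply h0
      rw [h] at ht2
      simpa using ht2.symm
    have htt : t ^ 2 - 1 ≠ 0 := fun h => h0 (by linarith)
    have hInt : (∫ u in (0 : ℝ)..(Real.pi / 2),
        Real.sin u ^ 2 * Real.cos u ^ 2 / (1 + β * Real.sin u ^ 2) ^ 2)
        = ∫ u in (0 : ℝ)..(Real.pi / 2),
        Real.sin u ^ 2 * Real.cos u ^ 2 / (1 + (t ^ 2 - 1) * Real.sin u ^ 2) ^ 2 := by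
      rw [← hβt]
    have hint : IntervalIntegrable
        (fun u => Real.sin u ^ 2 * Real.cos u ^ 2 / (1 + (t ^ 2 - 1) * Real.sin u ^ 2) ^ 2)
        MeasureTheory.volume (0 : ℝ) (Real.pi / 2) := by
      apply Continuous.intervalIntegrable
      apply Continuous.div (by fun_prop) (by fun_prop)
      intro u
      exact pow_ne_zero 2 (aux_pos t htpos u).ne'
    have heq := intervalIntegral.integral_eq_sub_of_hasDerivAt
      (f := fun v : ℝ =>
        (-v + ((t ^ 2 + 1) / (2 * t)) *
            (v + Real.arctan ((t - 1) * (Real.sin v * Real.cos v) /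
              (Real.cos v ^ 2 + t * Real.sin v ^ 2))) -
          ((t ^ 2 - 1) / 2) *
            (Real.sin v * Real.cos v / (1 + (t ^ 2 - 1) * Real.sin v ^ 2))) / (t ^ 2 - 1) ^ 2)
      (f' := fun u => Real.sin u ^ 2 * Real.cos u ^ 2 / (1 + (t ^ 2 - 1) * Real.sin u ^ 2) ^ 2)
      (fun u _ => aux_hasDeriv t htpos ht1 u) hint
    rw [hInt, heq]
    have h1t : (1 : ℝ) + t ≠ 0 := by positivity
    norm_num [Real.arctan_zero, Real.sin_pi_div_two, Real.cos_pi_div_two]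
    field_simp
    ring
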